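/- If a00·a11 - a01·a10 ≠ 0, all entries a00, a01, a10, a11 are nonzero, p00 ≠ p10 and p01 ≠ p11, then there is no point (x,y) ∈ ℝ² at which both the Jacobian determinant of G vanishes and (a00·a11 - a01·a10)x + (-a00·a11·p00 + a01·a10·p10) = 0. -/
import Mathlib

/-- If `a00a11 - a01a10 ≠ 0`, all entries nonzero, `p00 ≠ p10` and `p01 ≠ p11`, there is
no point where both the Jacobian determinant of `G` vanishes and
`(a00a11 - a01a10)x + (-a00a11p00 + a01a10p10) = 0`. -/
theorem no_common_zero_of_detJG_and_line
    (a00 a01 a10 a11 p00 p01 p10 p11 : ℝ)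
    (h00 : a00 ≠ 0) (h01 : a01 ≠ 0) (h10 : a10 ≠ 0) (h11 : a11 ≠ 0)
    (hdet : a00 * a11 - a01 * a10 ≠ 0) (hp0 : p00 ≠ p10) (hp1 : p01 ≠ p11) :
    ¬ ∃ x y : ℝ,
      4 * (a00 * (x - p00) * (a11 * (y - p11)) - a01 * (y - p01) * (a10 * (x - p10))) = 0 ∧
      (a00 * a11 - a01 * a10) * x + (-(a00 * a11 * p00) + a01 * a10 * p10) = 0 := by
  rintro ⟨x, y, hJ, hL⟩
  -- From the line equation: a00*a11*(x-p00) = a01*a10*(x-p10)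
  have hA : a00 * a11 * (x - p00) = a01 * a10 * (x - p10) := by linear_combination hL
  have hx0 : x ≠ p00 := by
    intro h
    have h1 : a01 * a10 * (p00 - p10) = 0 := by linear_combination -hA + (a00 * a11 - a01 * a10) * h
    rcases mul_eq_zero.mp h1 with h2 | h2
    · rcases mul_eq_zero.mp h2 with h3 | h3
      · exact h01 h3
      · exact h10 h3
    · exact hp0 (by linarith [sub_eq_zero.mp h2])
  have hAne : a00 * a11 * (x - p00) ≠ 0 :=
    mul_ne_zero (mul_ne_zero h00 h11) (sub_ne_zero.mpr hx0)
  have key : (a00 * a11 * (x - p00)) * (y - p11) = (a00 * a11 * (x - p00)) * (y - p01) := by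
    linear_combination (1/4 : ℝ) * hJ - (y - p01) * hA
  have := mul_left_cancel₀ hAne key
  exact hp1 (by linarith)
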